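/- For every λ > 0 there exists exactly one spectral pair at λ; that is, there exist c ∈ ℝ and Q : [θmin, θmax] → ℝ forming a spectral pair at λ, and if (c₁, Q₁) and (c₂, Q₂) are both spectral pairs at λ then c₁ = c₂ and Q₁ = Q₂. -/

import Mathlib

open Set Filter MeasureTheory

/-- A spectral pair `(c, Q)` at `lam` for parameters `thmin thmax alpha r`:
`Q` is positive, normalized, twice continuously differentiable, solves the eigenproblem
on `(thmin, thmax)` and satisfies Neumann boundary conditions. -/
def IsSpectralPair (thmin thmax alpha r lam c : ℝ) (Q : ℝ → ℝ) : Prop :=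
  ContDiff ℝ 2 Q ∧
  (∀ θ ∈ Set.Icc thmin thmax, 0 < Q θ) ∧
  (∫ θ in Set.Ioo thmin thmax, Q θ) = 1 ∧
  (∀ θ ∈ Set.Ioo thmin thmax,
    alpha * iteratedDeriv 2 Q θ + (-(lam * c) + θ * lam ^ 2 + r) * Q θ = 0) ∧
  deriv Q thmin = 0 ∧ deriv Q thmax = 0

namespace SpecAux

/-- power sum centered at x₀ -/
noncomputable def psum (c : ℕ → ℝ) (x₀ x : ℝ) : ℝ := ∑' n, c n * (x - x₀) ^ n

/-- derivative coefficient sequence -/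
noncomputable def dseq (c : ℕ → ℝ) : ℕ → ℝ := fun n => (n + 1) * c (n + 1)

/-- bound property guaranteeing entire function -/
def Good (c : ℕ → ℝ) (C : ℝ) : Prop :=
  1 ≤ C ∧ ∀ n : ℕ, |c n| * Real.sqrt (n.factorial : ℝ) ≤ C ^ (n + 1)

lemma sqrt_fact_pos (n : ℕ) : 0 < Real.sqrt (n.factorial : ℝ) :=
  Real.sqrt_pos.mpr (by exact_mod_cast n.factorial_pos)

lemma sqrt_fact_succ (n : ℕ) :
    Real.sqrt ((n + 1).factorial : ℝ)
      = Real.sqrt ((n : ℝ) + 1) * Real.sqrt (n.factorial : ℝ) := by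
  rw [Nat.factorial_succ, ← Real.sqrt_mul (by positivity)]
  push_cast
  ring_nf

lemma summable_master (C : ℝ) (hC : 0 ≤ C) :
    Summable (fun n : ℕ => C ^ n / Real.sqrt (n.factorial : ℝ)) := by
  apply summable_of_ratio_norm_eventually_le (r := 1/2) (by norm_num)
  filter_upwards [eventually_ge_atTop (Nat.ceil ((2*C)^2))] with n hn
  have h1 : (2*C)^2 ≤ ((n:ℝ) + 1) := by
    calc (2*C)^2 ≤ (Nat.ceil ((2*C)^2) : ℝ) := Nat.le_ceil _
    _ ≤ (n : ℝ) := by exact_mod_cast hn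
    _ ≤ (n : ℝ) + 1 := by linarith
  have h2 : 2 * C ≤ Real.sqrt ((n:ℝ)+1) := by
    rw [show (2*C) = |2*C| from (abs_of_nonneg (by positivity)).symm, ← Real.sqrt_sq_eq_abs]
    exact Real.sqrt_le_sqrt h1
  have hs1 : 0 < Real.sqrt ((n:ℝ)+1) := Real.sqrt_pos.mpr (by positivity)
  rw [Real.norm_eq_abs, Real.norm_eq_abs, abs_of_nonneg (by positivity),
    abs_of_nonneg (by positivity), sqrt_fact_succ]
  rw [div_le_iff₀ (by positivity)]
  have : C ^ (n+1) = C * C^n := by ring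
  rw [this]
  calc C * C ^ n ≤ (Real.sqrt ((n:ℝ)+1) / 2) * C ^ n := by
        apply mul_le_mul_of_nonneg_right (by linarith) (by positivity)
    _ = 1 / 2 * (C ^ n / Real.sqrt (↑n.factorial)) * (Real.sqrt (↑n+1) * Real.sqrt ↑n.factorial) := by
        field_simp
  
lemma Good.abs_le {c : ℕ → ℝ} {C : ℝ} (h : Good c C) (n : ℕ) :
    |c n| ≤ C ^ (n+1) / Real.sqrt (n.factorial : ℝ) := by
  rw [le_div_iff₀ (sqrt_fact_pos n)]
  exact h.2 n

lemma Good.nonneg {c : ℕ → ℝ} {C : ℝ} (h : Good c C) : (0:ℝ) ≤ C := le_trans zero_le_one h.1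

lemma sqrt_add_one_le_two_pow (n : ℕ) : Real.sqrt ((n:ℝ)+1) ≤ 2 ^ n := by
  have h1 : ((n:ℝ)+1) ≤ (2^n)^2 := by
    induction n with
    | zero => norm_num
    | succ m ih =>
      have : ((2:ℝ)^(m+1))^2 = 4 * ((2^m)^2) := by ring
      rw [this]
      push_cast
      push_cast at ih
      nlinarith [pow_pos (show (0:ℝ) < 2 by norm_num) m]
  calc Real.sqrt ((n:ℝ)+1) ≤ Real.sqrt (((2:ℝ)^n)^2) := Real.sqrt_le_sqrt h1
    _ = 2^n := by rw [Real.sqrt_sq (by positivity)]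

lemma Good.dseq {c : ℕ → ℝ} {C : ℝ} (h : Good c C) : Good (SpecAux.dseq c) (2 * C^2) := by
  refine ⟨by nlinarith [h.1], fun n => ?_⟩
  have hb := h.2 (n+1)
  have hC := h.nonneg
  have hC1 := h.1
  rw [sqrt_fact_succ] at hb
  have h1 : |SpecAux.dseq c n| = ((n:ℝ)+1) * |c (n+1)| := by
    rw [SpecAux.dseq, abs_mul, abs_of_nonneg (by positivity)]
  have h2 : ((n:ℝ)+1) = Real.sqrt ((n:ℝ)+1) * Real.sqrt ((n:ℝ)+1) :=
    (Real.mul_self_sqrt (by positivity : (0:ℝ) ≤ (n:ℝ)+1)).symm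
  have hs : 0 ≤ Real.sqrt ((n:ℝ)+1) := Real.sqrt_nonneg _
  calc |SpecAux.dseq c n| * Real.sqrt (n.factorial : ℝ)
      = Real.sqrt ((n:ℝ)+1) * (|c (n+1)| * (Real.sqrt ((n:ℝ)+1) * Real.sqrt (n.factorial : ℝ))) := by
        rw [h1]
        conv_lhs => rw [h2]
        ring
    _ ≤ Real.sqrt ((n:ℝ)+1) * C ^ (n+1+1) := by
        apply mul_le_mul_of_nonneg_left hb hs
    _ ≤ 2^n * C^(n+2) := by
        apply mul_le_mul_of_nonneg_right (sqrt_add_one_le_two_pow n) (by positivity)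
    _ ≤ 2^(n+1) * C^(2*n+2) := by
        have e1 : (2:ℝ)^n ≤ 2^(n+1) := by
          apply pow_le_pow_right₀ (by norm_num) (by omega)
        have e2 : C^(n+2) ≤ C^(2*n+2) := by
          apply pow_le_pow_right₀ hC1 (by omega)
        have : (0:ℝ) ≤ 2^(n+1) := by positivity
        nlinarith [pow_nonneg hC (n+2), pow_nonneg (show (0:ℝ) ≤ 2 by norm_num) n]
    _ = (2*C^2)^(n+1) := by rw [mul_pow, ← pow_mul]; ring_nf

lemma Good.summable_bound {c : ℕ → ℝ} {C : ℝ} (h : Good c C) {R : ℝ} (hR : 0 ≤ R) :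
    Summable (fun n : ℕ => C ^ (n+1) * R ^ n / Real.sqrt (n.factorial : ℝ)) := by
  have hC := h.nonneg
  have : (fun n : ℕ => C ^ (n+1) * R ^ n / Real.sqrt (n.factorial : ℝ))
      = (fun n : ℕ => C * ((C*R) ^ n / Real.sqrt (n.factorial : ℝ))) := by
    funext n
    rw [mul_pow, pow_succ]
    ring
  rw [this]
  exact (summable_master (C*R) (by positivity)).mul_left C

lemma Good.term_bound {c : ℕ → ℝ} {C : ℝ} (h : Good c C) {x₀ x R : ℝ}
    (hR : |x - x₀| ≤ R) (n : ℕ) :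
    |c n * (x - x₀) ^ n| ≤ C ^ (n+1) * R ^ n / Real.sqrt (n.factorial : ℝ) := by
  have h0 : (0:ℝ) ≤ R := le_trans (abs_nonneg _) hR
  rw [abs_mul, abs_pow]
  calc |c n| * |x - x₀| ^ n ≤ (C ^ (n+1) / Real.sqrt (n.factorial : ℝ)) * R ^ n := by
        apply mul_le_mul (h.abs_le n) (pow_le_pow_left₀ (abs_nonneg _) hR n)
          (by positivity) (div_nonneg (pow_nonneg h.nonneg _) (Real.sqrt_nonneg _))
    _ = C ^ (n+1) * R ^ n / Real.sqrt (n.factorial : ℝ) := by ring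

lemma Good.summable {c : ℕ → ℝ} {C : ℝ} (h : Good c C) (x₀ x : ℝ) :
    Summable (fun n : ℕ => c n * (x - x₀) ^ n) := by
  apply Summable.of_norm_bounded (h.summable_bound (abs_nonneg (x - x₀)))
  exact fun n => h.term_bound le_rfl n

lemma psum_center (c : ℕ → ℝ) (x₀ : ℝ) : psum c x₀ x₀ = c 0 := by
  rw [psum]
  rw [tsum_eq_single 0]
  · simp
  · intro n hn
    rcases Nat.exists_eq_succ_of_ne_zero hn with ⟨m, rfl⟩
    simp

lemma Good.hasDerivAt_psum {c : ℕ → ℝ} {C : ℝ} (h : Good c C) (x₀ x : ℝ) :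
    HasDerivAt (psum c x₀) (psum (SpecAux.dseq c) x₀ x) x := by
  classical
  set R : ℝ := |x - x₀| + 1 with hRdef
  have hR0 : 0 < R := by positivity
  set t : Set ℝ := Metric.ball x₀ R with htdef
  have hxt : x ∈ t := by
    simp [htdef, Metric.mem_ball, Real.dist_eq]
    linarith [abs_nonneg (x - x₀)]
  set g : ℕ → ℝ → ℝ := fun n y => c n * (y - x₀) ^ n with hgdef
  set g' : ℕ → ℝ → ℝ := fun n y => c n * (n * (y - x₀) ^ (n - 1)) with hg'def
  set u : ℕ → ℝ := fun n =>
    if n = 0 then 0 else (2*C^2) ^ n * R ^ (n-1) / Real.sqrt ((n-1).factorial : ℝ) with hudef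
  have hu : Summable u := by
    rw [← summable_nat_add_iff 1]
    have : (fun n : ℕ => u (n + 1))
        = (fun n : ℕ => (2*C^2) ^ (n+1) * R ^ n / Real.sqrt (n.factorial : ℝ)) := by
      funext n; simp [hudef]
    rw [this]
    exact h.dseq.summable_bound (le_of_lt hR0)
  have hg : ∀ (n : ℕ) (y : ℝ), y ∈ t → HasDerivAt (g n) (g' n y) y := by
    intro n y _
    have h1 : HasDerivAt (fun y : ℝ => (y - x₀) ^ n) ((n * (y - x₀) ^ (n-1)) * 1) y :=
      (hasDerivAt_pow n (y - x₀)).comp y ((hasDerivAt_id y).sub_const x₀)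
    simpa [hg'def, mul_one] using h1.const_mul (c n)
  have hg' : ∀ (n : ℕ) (y : ℝ), y ∈ t → ‖g' n y‖ ≤ u n := by
    intro n y hy
    match n with
    | 0 => simp [hg'def, hudef]
    | (m+1) =>
      have hyR : |y - x₀| ≤ R := le_of_lt (by simpa [htdef, Metric.mem_ball, Real.dist_eq] using hy)
      have heq : g' (m+1) y = SpecAux.dseq c m * (y - x₀) ^ m := by
        simp only [hg'def, SpecAux.dseq, Nat.add_sub_cancel]
        push_cast
        ring
      rw [Real.norm_eq_abs, heq]
      have hb := h.dseq.term_bound hyR m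
      simpa [hudef] using hb
  have hg0 : Summable fun n => g n x := h.summable x₀ x
  have key := hasDerivAt_tsum_of_isPreconnected hu Metric.isOpen_ball
    (convex_ball x₀ R).isPreconnected hg hg' hxt hg0 hxt
  have hsum : ∑' n, g' n x = psum (SpecAux.dseq c) x₀ x := by
    have hsumm : Summable fun n => g' n x :=
      Summable.of_norm_bounded hu (fun n => hg' n x hxt)
    rw [hsumm.tsum_eq_zero_add]
    have h0 : g' 0 x = 0 := by simp [hg'def]
    rw [h0, zero_add, psum]
    apply tsum_congr
    intro n
    simp only [hg'def, SpecAux.dseq, Nat.add_sub_cancel]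
    push_cast
    ring
  rw [← hsum]
  exact key

lemma Good.continuous_psum {c : ℕ → ℝ} {C : ℝ} (h : Good c C) (x₀ : ℝ) :
    Continuous (psum c x₀) := by
  rw [continuous_iff_continuousAt]
  exact fun x => (h.hasDerivAt_psum x₀ x).continuousAt

/-- Taylor coefficients of the solution of `y'' = (A(x-x₀)+B) y`, `y(x₀)=1`, `y'(x₀)=0`. -/
noncomputable def coef (A B : ℝ) : ℕ → ℝ
  | 0 => 1
  | 1 => 0
  | n+2 => (B * coef A B n + A * (if n = 0 then 0 else coef A B (n-1)))
      / (((n:ℝ)+1) * ((n:ℝ)+2))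

lemma coef_rec (A B : ℝ) (n : ℕ) :
    (((n:ℝ)+1) * ((n:ℝ)+2)) * coef A B (n+2)
      = B * coef A B n + A * (if n = 0 then 0 else coef A B (n-1)) := by
  have hd : (((n:ℝ)+1) * ((n:ℝ)+2)) ≠ 0 := by positivity
  rw [coef]
  field_simp

lemma sqrt_three_prod_le (n : ℕ) :
    Real.sqrt (n:ℝ) * Real.sqrt ((n:ℝ)+1) * Real.sqrt ((n:ℝ)+2)
      ≤ ((n:ℝ)+1) * ((n:ℝ)+2) := by
  have h1 : Real.sqrt (n:ℝ) * Real.sqrt ((n:ℝ)+1) * Real.sqrt ((n:ℝ)+2)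
      = Real.sqrt ((n:ℝ) * (((n:ℝ)+1) * ((n:ℝ)+2))) := by
    rw [Real.sqrt_mul (by positivity), Real.sqrt_mul (by positivity)]
    ring
  rw [h1]
  calc Real.sqrt ((n:ℝ) * (((n:ℝ)+1) * ((n:ℝ)+2)))
      ≤ Real.sqrt ((((n:ℝ)+1) * ((n:ℝ)+2))^2) := by
        apply Real.sqrt_le_sqrt
        nlinarith [Nat.cast_nonneg (α := ℝ) n]
    _ = ((n:ℝ)+1) * ((n:ℝ)+2) := Real.sqrt_sq (by positivity)

lemma coef_good {A B C : ℝ} (hC : 1 ≤ C) (hB : 2*|B| ≤ C^2) (hA : 2*|A| ≤ C^3) :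
    Good (coef A B) C := by
  have hC0 : (0:ℝ) ≤ C := le_trans zero_le_one hC
  refine ⟨hC, fun n => ?_⟩
  induction n using Nat.strong_induction_on with
  | _ n ih =>
    match n with
    | 0 => simp [coef, Nat.factorial]; exact_mod_cast hC
    | 1 => simp [coef, Nat.factorial]; positivity
    | (n+2) =>
      have hd : (0:ℝ) < ((n:ℝ)+1) * ((n:ℝ)+2) := by positivity
      have hrec := coef_rec A B n
      have hcn := ih n (by omega)
      -- sqrt factorial factorization
      have hf2 : Real.sqrt (((n+2).factorial : ℝ))
          = Real.sqrt ((n:ℝ)+2) * Real.sqrt ((n:ℝ)+1) * Real.sqrt ((n.factorial : ℝ)) := by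
        rw [sqrt_fact_succ (n+1), sqrt_fact_succ n]
        push_cast
        ring
      have hs1 : Real.sqrt ((n:ℝ)+1) ≤ (n:ℝ)+1 := by
        nlinarith [Real.sq_sqrt (show (0:ℝ) ≤ (n:ℝ)+1 by positivity),
          Real.sqrt_nonneg ((n:ℝ)+1), Nat.cast_nonneg (α := ℝ) n,
          Real.sqrt_le_sqrt (show ((n:ℝ)+1) ≤ ((n:ℝ)+1)^2 by nlinarith [Nat.cast_nonneg (α := ℝ) n]),
          Real.sqrt_sq (show (0:ℝ) ≤ (n:ℝ)+1 by positivity)]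
      have hs2 : Real.sqrt ((n:ℝ)+2) ≤ (n:ℝ)+2 := by
        nlinarith [Real.sqrt_le_sqrt (show ((n:ℝ)+2) ≤ ((n:ℝ)+2)^2 by nlinarith [Nat.cast_nonneg (α := ℝ) n]),
          Real.sqrt_sq (show (0:ℝ) ≤ (n:ℝ)+2 by positivity)]
      have hsn : (0:ℝ) < Real.sqrt ((n.factorial : ℝ)) := sqrt_fact_pos n
      have hs1p : (0:ℝ) ≤ Real.sqrt ((n:ℝ)+1) := Real.sqrt_nonneg _
      have hs2p : (0:ℝ) ≤ Real.sqrt ((n:ℝ)+2) := Real.sqrt_nonneg _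
      -- numerator bound
      have habs : |coef A B (n+2)| * (((n:ℝ)+1) * ((n:ℝ)+2))
          ≤ |B| * |coef A B n| + |A| * |(if n = 0 then (0:ℝ) else coef A B (n-1))| := by
        have : |(((n:ℝ)+1) * ((n:ℝ)+2)) * coef A B (n+2)|
            = |coef A B (n+2)| * (((n:ℝ)+1) * ((n:ℝ)+2)) := by
          rw [abs_mul, abs_of_pos hd]; ring
        rw [← this, hrec]
        calc |B * coef A B n + A * (if n = 0 then (0:ℝ) else coef A B (n-1))|
            ≤ |B * coef A B n| + |A * (if n = 0 then (0:ℝ) else coef A B (n-1))| := abs_add_le _ _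
          _ = |B| * |coef A B n| + |A| * |(if n = 0 then (0:ℝ) else coef A B (n-1))| := by
              rw [abs_mul, abs_mul]
      -- term 1 bound
      have ht1 : |B| * (|coef A B n| * Real.sqrt ((n.factorial:ℝ)))
            * (Real.sqrt ((n:ℝ)+1) * Real.sqrt ((n:ℝ)+2))
          ≤ (C^(n+3) / 2) * (((n:ℝ)+1) * ((n:ℝ)+2)) := by
        have e1 : |B| * (|coef A B n| * Real.sqrt ((n.factorial:ℝ))) ≤ (C^2/2) * C^(n+1) := by
          apply mul_le_mul (by linarith) hcn (by positivity) (by positivity)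
        have e2 : Real.sqrt ((n:ℝ)+1) * Real.sqrt ((n:ℝ)+2) ≤ ((n:ℝ)+1) * ((n:ℝ)+2) :=
          mul_le_mul hs1 hs2 hs2p (by positivity)
        calc |B| * (|coef A B n| * Real.sqrt ((n.factorial:ℝ)))
              * (Real.sqrt ((n:ℝ)+1) * Real.sqrt ((n:ℝ)+2))
            ≤ ((C^2/2) * C^(n+1)) * (((n:ℝ)+1) * ((n:ℝ)+2)) := by
              apply mul_le_mul e1 e2 (by positivity) (by positivity)
          _ = (C^(n+3)/2) * (((n:ℝ)+1) * ((n:ℝ)+2)) := by ring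
      -- term 2 bound
      have ht2 : |A| * |(if n = 0 then (0:ℝ) else coef A B (n-1))| * Real.sqrt ((n.factorial:ℝ))
            * (Real.sqrt ((n:ℝ)+1) * Real.sqrt ((n:ℝ)+2))
          ≤ (C^(n+3) / 2) * (((n:ℝ)+1) * ((n:ℝ)+2)) := by
        match n with
        | 0 =>
          simp only [reduceIte, abs_zero, mul_zero, zero_mul]
          have hp : (0:ℝ) ≤ C^(0+3) := pow_nonneg hC0 _
          have h01 : ((0:ℕ):ℝ) = 0 := by norm_num
          rw [h01]
          nlinarith
        | (m+1) =>
          simp only [Nat.add_sub_cancel, if_neg (Nat.succ_ne_zero m)]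
          push_cast
          have hcm := ih m (by omega)
          have hfm : Real.sqrt (((m+1).factorial : ℝ))
              = Real.sqrt ((m:ℝ)+1) * Real.sqrt ((m.factorial : ℝ)) := sqrt_fact_succ m
          have h3 : Real.sqrt ((m:ℝ)+1) * Real.sqrt (((m:ℝ)+1)+1) * Real.sqrt (((m:ℝ)+1)+2)
              ≤ (((m:ℝ)+1)+1) * (((m:ℝ)+1)+2) := by
            have := sqrt_three_prod_le (m+1)
            push_cast at this ⊢
            convert this using 3 <;> push_cast <;> ring
          have e1 : |A| * (|coef A B m| * Real.sqrt ((m.factorial:ℝ))) ≤ (C^3/2) * C^(m+1) := by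
            apply mul_le_mul (by linarith) hcm (by positivity) (by positivity)
          have hsm : (0:ℝ) ≤ Real.sqrt ((m.factorial : ℝ)) := Real.sqrt_nonneg _
          calc |A| * |coef A B m| * Real.sqrt (((m+1).factorial:ℝ))
                * (Real.sqrt (((m:ℝ)+1)+1) * Real.sqrt (((m:ℝ)+1)+2))
              = (|A| * (|coef A B m| * Real.sqrt ((m.factorial:ℝ))))
                * (Real.sqrt ((m:ℝ)+1) * Real.sqrt (((m:ℝ)+1)+1) * Real.sqrt (((m:ℝ)+1)+2)) := by
                rw [hfm]; ring
            _ ≤ ((C^3/2) * C^(m+1)) * ((((m:ℝ)+1)+1) * (((m:ℝ)+1)+2)) := by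
                apply mul_le_mul e1 h3 (by positivity) (by positivity)
            _ = (C^(m+1+3)/2) * ((((m:ℝ)+1)+1) * (((m:ℝ)+1)+2)) := by ring
      -- combine
      have hgoal : |coef A B (n+2)| * Real.sqrt (((n+2).factorial : ℝ)) ≤ C^(n+3) := by
        rw [hf2]
        have key : |coef A B (n+2)| * (((n:ℝ)+1)*((n:ℝ)+2))
              * (Real.sqrt ((n.factorial:ℝ)) * (Real.sqrt ((n:ℝ)+1) * Real.sqrt ((n:ℝ)+2)))
            ≤ C^(n+3) * (((n:ℝ)+1)*((n:ℝ)+2)) := by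
          calc |coef A B (n+2)| * (((n:ℝ)+1)*((n:ℝ)+2))
                  * (Real.sqrt ((n.factorial:ℝ)) * (Real.sqrt ((n:ℝ)+1) * Real.sqrt ((n:ℝ)+2)))
              ≤ (|B| * |coef A B n| + |A| * |(if n = 0 then (0:ℝ) else coef A B (n-1))|)
                  * (Real.sqrt ((n.factorial:ℝ)) * (Real.sqrt ((n:ℝ)+1) * Real.sqrt ((n:ℝ)+2))) := by
                apply mul_le_mul_of_nonneg_right habs (by positivity)
            _ = |B| * (|coef A B n| * Real.sqrt ((n.factorial:ℝ)))
                  * (Real.sqrt ((n:ℝ)+1) * Real.sqrt ((n:ℝ)+2))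
                + |A| * |(if n = 0 then (0:ℝ) else coef A B (n-1))| * Real.sqrt ((n.factorial:ℝ))
                  * (Real.sqrt ((n:ℝ)+1) * Real.sqrt ((n:ℝ)+2)) := by ring
            _ ≤ (C^(n+3)/2) * (((n:ℝ)+1)*((n:ℝ)+2)) + (C^(n+3)/2) * (((n:ℝ)+1)*((n:ℝ)+2)) := by
                exact add_le_add ht1 ht2
            _ = C^(n+3) * (((n:ℝ)+1)*((n:ℝ)+2)) := by ring
        have e : (|coef A B (n+2)| * (Real.sqrt ((n:ℝ)+2) * Real.sqrt ((n:ℝ)+1)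
              * Real.sqrt ((n.factorial:ℝ)))) * (((n:ℝ)+1)*((n:ℝ)+2))
            = |coef A B (n+2)| * (((n:ℝ)+1)*((n:ℝ)+2))
              * (Real.sqrt ((n.factorial:ℝ)) * (Real.sqrt ((n:ℝ)+1) * Real.sqrt ((n:ℝ)+2))) := by
          ring
        exact le_of_mul_le_mul_right (by rw [e]; exact key) hd
      calc |coef A B (n+2)| * Real.sqrt (((n+2).factorial : ℝ)) ≤ C^(n+3) := hgoal
        _ = C^(n+2+1) := by ring

/-- continuity of coefficients in `B` -/
lemma coef_continuous (A : ℝ) (n : ℕ) : Continuous (fun b : ℝ => coef A b n) := by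
  induction n using Nat.strong_induction_on with
  | _ n ih =>
    match n with
    | 0 => simp only [coef]; exact continuous_const
    | 1 => simp only [coef]; exact continuous_const
    | (n+2) =>
      simp only [coef]
      have h1 : Continuous fun b : ℝ => b * coef A b n := continuous_id.mul (ih n (by omega))
      have h2 : Continuous fun b : ℝ => A * (if n = 0 then (0:ℝ) else coef A b (n-1)) := by
        match n with
        | 0 => simp only [reduceIte, mul_zero]; exact continuous_const
        | (m+1) =>
          simp only [if_neg (Nat.succ_ne_zero m), Nat.add_sub_cancel]
          exact continuous_const.mul (ih m (by omega))
      exact (h1.add h2).div_const _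

lemma tsum_shift_mul {c : ℕ → ℝ} {X : ℝ} (hc : Summable fun n => c n * X ^ n) :
    ∑' n : ℕ, (if n = 0 then (0:ℝ) else c (n-1)) * X ^ n
      = X * ∑' n : ℕ, c n * X ^ n := by
  have hfe : (fun n : ℕ => (if n+1 = 0 then (0:ℝ) else c (n+1-1)) * X ^ (n+1))
      = fun n : ℕ => X * (c n * X ^ n) := by
    funext n
    simp only [Nat.succ_ne_zero, if_false, Nat.add_sub_cancel]
    ring
  have hs : Summable fun n : ℕ => (if n = 0 then (0:ℝ) else c (n-1)) * X ^ n := by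
    rw [← summable_nat_add_iff 1]
    simpa only [hfe] using hc.mul_left X
  rw [hs.tsum_eq_zero_add]
  have h0 : (if (0:ℕ) = 0 then (0:ℝ) else c (0-1)) * X ^ 0 = 0 := by simp
  rw [h0, zero_add]
  calc ∑' n : ℕ, (if n+1 = 0 then (0:ℝ) else c (n+1-1)) * X ^ (n+1)
      = ∑' n : ℕ, X * (c n * X ^ n) := by rw [hfe]
    _ = X * ∑' n : ℕ, c n * X ^ n := tsum_mul_left

/-- the power series of `coef A B` satisfies the ODE `y'' = (A(x-x₀)+B) y`. -/
lemma psum_coef_ode {A B C : ℝ} (h : Good (coef A B) C) (x₀ x : ℝ) :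
    psum (dseq (dseq (coef A B))) x₀ x
      = (A * (x - x₀) + B) * psum (coef A B) x₀ x := by
  set c := coef A B with hc
  set X := x - x₀ with hX
  have hsum : Summable fun n => c n * X ^ n := h.summable x₀ x
  have hterm : ∀ n : ℕ, dseq (dseq c) n * X ^ n
      = B * (c n * X ^ n) + A * ((if n = 0 then (0:ℝ) else c (n-1)) * X ^ n) := by
    intro n
    have h1 : SpecAux.dseq (SpecAux.dseq c) n = (((n:ℝ)+1) * ((n:ℝ)+2)) * c (n+2) := by
      simp only [SpecAux.dseq]
      push_cast
      ring
    rw [h1, coef_rec A B n]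
    ring
  have hs1 : Summable fun n => B * (c n * X ^ n) := hsum.mul_left B
  have hs2 : Summable fun n => A * ((if n = 0 then (0:ℝ) else c (n-1)) * X ^ n) := by
    apply Summable.mul_left A
    rw [← summable_nat_add_iff 1]
    have hfe : (fun n : ℕ => (if n+1 = 0 then (0:ℝ) else c (n+1-1)) * X ^ (n+1))
        = fun n : ℕ => X * (c n * X ^ n) := by
      funext n
      simp only [Nat.succ_ne_zero, if_false, Nat.add_sub_cancel]
      ring
    simpa only [hfe] using hsum.mul_left X
  calc psum (SpecAux.dseq (SpecAux.dseq c)) x₀ x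
      = ∑' n : ℕ, (B * (c n * X ^ n)
          + A * ((if n = 0 then (0:ℝ) else c (n-1)) * X ^ n)) := by
        rw [psum]
        exact tsum_congr hterm
    _ = B * ∑' n : ℕ, c n * X ^ n
        + A * ∑' n : ℕ, (if n = 0 then (0:ℝ) else c (n-1)) * X ^ n := by
        rw [hs1.tsum_add hs2, tsum_mul_left, tsum_mul_left]
    _ = B * psum c x₀ x + A * (X * psum c x₀ x) := by
        rw [tsum_shift_mul hsum]
        rfl
    _ = (A * X + B) * psum c x₀ x := by ring

/-- joint continuity of a parametrized family of power sums -/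
lemma continuous_psum_family {cc : ℕ → ℝ → ℝ} (x₀ : ℝ)
    (hcont : ∀ n, Continuous (cc n))
    (hC : ∀ K : ℝ, 0 < K → ∃ C : ℝ, ∀ μ ∈ Icc (-K) K, Good (fun n => cc n μ) C) :
    Continuous (fun p : ℝ × ℝ => psum (fun n => cc n p.1) x₀ p.2) := by
  rw [continuous_iff_continuousAt]
  intro p₀
  obtain ⟨μ₀, y₀⟩ := p₀
  set K : ℝ := |μ₀| + 1 with hK
  obtain ⟨C, hCgood⟩ := hC K (by positivity)
  have hμ₀ : μ₀ ∈ Icc (-K) K := by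
    constructor <;> simp only [hK] <;> cases abs_cases μ₀ <;> linarith [abs_nonneg μ₀]
  have hCC : 1 ≤ C := (hCgood μ₀ hμ₀).1
  set R : ℝ := |y₀ - x₀| + 1 with hR
  set s : Set (ℝ × ℝ) := Icc (-K) K ×ˢ Icc (y₀ - 1) (y₀ + 1) with hs
  set u : ℕ → ℝ := fun n => C ^ (n+1) * R ^ n / Real.sqrt (n.factorial : ℝ) with hu
  have hus : Summable u := (hCgood μ₀ hμ₀).summable_bound (by positivity)
  have hbound : ∀ (n : ℕ) (p : ℝ × ℝ), p ∈ s → ‖cc n p.1 * (p.2 - x₀) ^ n‖ ≤ u n := by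
    intro n p hp
    obtain ⟨hp1, hp2⟩ := hp
    have hxR : |p.2 - x₀| ≤ R := by
      rw [hR]
      simp only [mem_Icc] at hp2
      cases abs_cases (p.2 - x₀) <;> cases abs_cases (y₀ - x₀) <;> linarith
    exact (hCgood p.1 hp1).term_bound hxR n
  have huc := tendstoUniformlyOn_tsum hus hbound
  have hconts : ContinuousOn (fun p : ℝ × ℝ => ∑' n, cc n p.1 * (p.2 - x₀) ^ n) s := by
    apply huc.continuousOn
    refine Filter.Frequently.of_forall (fun t => ?_)
    apply Continuous.continuousOn
    apply continuous_finset_sum t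
    intro n _
    exact ((hcont n).comp continuous_fst).mul ((continuous_snd.sub continuous_const).pow n)
  have hm1 : -K < μ₀ := by cases abs_cases μ₀ <;> simp only [hK] <;> linarith [abs_nonneg μ₀]
  have hm2 : μ₀ < K := by cases abs_cases μ₀ <;> simp only [hK] <;> linarith [abs_nonneg μ₀]
  have hsnhds : s ∈ nhds ((μ₀, y₀) : ℝ × ℝ) := by
    rw [hs]
    exact prod_mem_nhds (Icc_mem_nhds hm1 hm2) (Icc_mem_nhds (by linarith) (by linarith))
  exact (hconts.continuousAt hsnhds : ContinuousAt _ _)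

end SpecAux


namespace SpecAux

section Uniqueness

variable {a b alpha r lam : ℝ}

lemma ode_on_Icc {c : ℝ} {Q : ℝ → ℝ} (hab : a < b)
    (hsp : IsSpectralPair a b alpha r lam c Q) :
    ∀ θ ∈ Icc a b,
      alpha * iteratedDeriv 2 Q θ + (-(lam * c) + θ * lam ^ 2 + r) * Q θ = 0 := by
  obtain ⟨hC, -, -, hode, -, -⟩ := hsp
  have hcont : Continuous fun θ =>
      alpha * iteratedDeriv 2 Q θ + (-(lam * c) + θ * lam ^ 2 + r) * Q θ := by
    have h2 : Continuous (iteratedDeriv 2 Q) :=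
      hC.continuous_iteratedDeriv 2 (by exact_mod_cast le_rfl)
    have hQc : Continuous Q := hC.continuous
    fun_prop
  have hclosed : IsClosed {θ : ℝ | alpha * iteratedDeriv 2 Q θ
      + (-(lam * c) + θ * lam ^ 2 + r) * Q θ = 0} :=
    isClosed_eq hcont continuous_const
  intro θ hθ
  have : Icc a b ⊆ {θ : ℝ | alpha * iteratedDeriv 2 Q θ
      + (-(lam * c) + θ * lam ^ 2 + r) * Q θ = 0} := by
    rw [← closure_Ioo (ne_of_lt hab)]
    exact closure_minimal (fun x hx => hode x hx) hclosed
  exact this hθ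

lemma spectral_uniqueness (hab : a < b) (halpha : 0 < alpha) (hlam : 0 < lam)
    {c₁ c₂ : ℝ} {Q₁ Q₂ : ℝ → ℝ}
    (h1 : IsSpectralPair a b alpha r lam c₁ Q₁)
    (h2 : IsSpectralPair a b alpha r lam c₂ Q₂) :
    c₁ = c₂ ∧ ∀ θ ∈ Icc a b, Q₁ θ = Q₂ θ := by
  have hode1 := ode_on_Icc hab h1
  have hode2 := ode_on_Icc hab h2
  obtain ⟨hC1, hpos1, hint1, -, hda1, hdb1⟩ := h1
  obtain ⟨hC2, hpos2, hint2, -, hda2, hdb2⟩ := h2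
  have two_eq : ((2:ℕ) : WithTop ℕ∞) = ((1:ℕ) : WithTop ℕ∞) + 1 := by norm_num
  -- differentiability facts
  have hd1 : Differentiable ℝ Q₁ := hC1.differentiable (by norm_num)
  have hd2 : Differentiable ℝ Q₂ := hC2.differentiable (by norm_num)
  have hdd1 : Differentiable ℝ (deriv Q₁) := by
    have := hC1.differentiable_iteratedDeriv 1 (by exact_mod_cast Nat.one_lt_two)
    rwa [iteratedDeriv_one] at this
  have hdd2 : Differentiable ℝ (deriv Q₂) := by
    have := hC2.differentiable_iteratedDeriv 1 (by exact_mod_cast Nat.one_lt_two)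
    rwa [iteratedDeriv_one] at this
  have hid1 : iteratedDeriv 2 Q₁ = deriv (deriv Q₁) := by
    rw [iteratedDeriv_succ, iteratedDeriv_one]
  have hid2 : iteratedDeriv 2 Q₂ = deriv (deriv Q₂) := by
    rw [iteratedDeriv_succ, iteratedDeriv_one]
  have hcdd1 : Continuous (deriv (deriv Q₁)) := by
    rw [← hid1]; exact hC1.continuous_iteratedDeriv 2 (by exact_mod_cast le_rfl)
  have hcdd2 : Continuous (deriv (deriv Q₂)) := by
    rw [← hid2]; exact hC2.continuous_iteratedDeriv 2 (by exact_mod_cast le_rfl)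
  -- Wronskian
  set W : ℝ → ℝ := fun θ => deriv Q₁ θ * Q₂ θ - Q₁ θ * deriv Q₂ θ with hW
  set dW : ℝ → ℝ := fun θ => deriv (deriv Q₁) θ * Q₂ θ - Q₁ θ * deriv (deriv Q₂) θ with hdW
  have hWd : ∀ θ, HasDerivAt W (dW θ) θ := by
    intro θ
    have h := (((hdd1 θ).hasDerivAt).mul ((hd2 θ).hasDerivAt)).sub
      (((hd1 θ).hasDerivAt).mul ((hdd2 θ).hasDerivAt))
    refine h.congr_deriv ?_
    simp only [hdW]
    ring
  have hdWc : Continuous dW := by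
    simp only [hdW]
    exact ((hcdd1.mul hd2.continuous).sub (hd1.continuous.mul hcdd2))
  have hWa : W a = 0 := by simp [hW, hda1, hda2]
  have hWb : W b = 0 := by simp [hW, hdb1, hdb2]
  -- second derivative values on Icc
  have hdd1e : ∀ θ ∈ Icc a b,
      deriv (deriv Q₁) θ = ((lam * c₁ - θ * lam^2 - r)/alpha) * Q₁ θ := by
    intro θ hθ
    have h := hode1 θ hθ
    rw [hid1] at h
    field_simp
    linarith
  have hdd2e : ∀ θ ∈ Icc a b,
      deriv (deriv Q₂) θ = ((lam * c₂ - θ * lam^2 - r)/alpha) * Q₂ θ := by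
    intro θ hθ
    have h := hode2 θ hθ
    rw [hid2] at h
    field_simp
    linarith
  have hdWe : ∀ θ ∈ Icc a b, dW θ = (lam * (c₁ - c₂) / alpha) * (Q₁ θ * Q₂ θ) := by
    intro θ hθ
    rw [hdW]
    simp only
    rw [hdd1e θ hθ, hdd2e θ hθ]
    field_simp
    ring
  -- FTC
  have hftc : ∫ θ in a..b, dW θ = 0 := by
    rw [intervalIntegral.integral_eq_sub_of_hasDerivAt
      (fun x _ => hWd x) (hdWc.intervalIntegrable a b), hWa, hWb, sub_zero]
  have hcongr : ∫ θ in a..b, dW θ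
      = (lam * (c₁ - c₂) / alpha) * ∫ θ in a..b, Q₁ θ * Q₂ θ := by
    rw [← intervalIntegral.integral_const_mul]
    apply intervalIntegral.integral_congr
    intro θ hθ
    rw [uIcc_of_le (le_of_lt hab)] at hθ
    exact hdWe θ hθ
  have hQQpos : 0 < ∫ θ in a..b, Q₁ θ * Q₂ θ := by
    apply intervalIntegral.intervalIntegral_pos_of_pos_on
      ((hd1.continuous.mul hd2.continuous).intervalIntegrable a b)
      (fun x hx => mul_pos (hpos1 x (Ioo_subset_Icc_self hx)) (hpos2 x (Ioo_subset_Icc_self hx)))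
      hab
  have hceq : c₁ = c₂ := by
    have h0 : (lam * (c₁ - c₂) / alpha) * ∫ θ in a..b, Q₁ θ * Q₂ θ = 0 := by
      rw [← hcongr]; exact hftc
    rcases mul_eq_zero.mp h0 with h | h
    · rcases div_eq_zero_iff.mp h with h' | h'
      · rcases mul_eq_zero.mp h' with h'' | h''
        · exact absurd h'' (ne_of_gt hlam)
        · linarith
      · exact absurd h' (ne_of_gt halpha)
    · exact absurd h (ne_of_gt hQQpos)
  refine ⟨hceq, ?_⟩
  -- Wronskian vanishes identically
  have hdW0 : ∀ θ ∈ Icc a b, dW θ = 0 := by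
    intro θ hθ
    rw [hdWe θ hθ, hceq]
    ring
  have hWzero : ∀ θ ∈ Icc a b, W θ = 0 := by
    intro θ hθ
    have := constant_of_has_deriv_right_zero (f := W) (a := a) (b := b)
      (Continuous.continuousOn (by
        simp only [hW]
        exact (hdd1.continuous.mul hd2.continuous).sub (hd1.continuous.mul hdd2.continuous)))
      (fun x hx => by
        have := (hWd x).hasDerivWithinAt (s := Ici x)
        rwa [hdW0 x (Ico_subset_Icc_self hx)] at this) θ hθ
    rw [this, hWa]
  -- ratio is constant
  set h : ℝ → ℝ := fun θ => Q₁ θ / Q₂ θ with hh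
  have hhconst : ∀ θ ∈ Icc a b, h θ = h a := by
    apply constant_of_has_deriv_right_zero
    · apply ContinuousOn.div (hd1.continuous.continuousOn) (hd2.continuous.continuousOn)
      exact fun x hx => ne_of_gt (hpos2 x hx)
    · intro x hx
      have hx' : x ∈ Icc a b := Ico_subset_Icc_self hx
      have hQ2 : Q₂ x ≠ 0 := ne_of_gt (hpos2 x hx')
      have hder : HasDerivAt h (W x / (Q₂ x)^2) x :=
        ((hd1 x).hasDerivAt).div ((hd2 x).hasDerivAt) hQ2
      rw [hWzero x hx', zero_div] at hder
      exact hder.hasDerivWithinAt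
  set κ : ℝ := Q₁ a / Q₂ a with hκ
  have hQeq : ∀ θ ∈ Icc a b, Q₁ θ = κ * Q₂ θ := by
    intro θ hθ
    have h1 := hhconst θ hθ
    have hQ2 : Q₂ θ ≠ 0 := ne_of_gt (hpos2 θ hθ)
    rw [hh] at h1
    simp only at h1
    rw [div_eq_iff hQ2] at h1
    rw [h1, hκ]
  have hκ1 : κ = 1 := by
    have hint : ∫ θ in Ioo a b, Q₁ θ = κ * ∫ θ in Ioo a b, Q₂ θ := by
      rw [← integral_const_mul]
      apply setIntegral_congr_fun measurableSet_Ioo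
      intro θ hθ
      exact hQeq θ (Ioo_subset_Icc_self hθ)
    rw [hint1, hint2, mul_one] at hint
    exact hint.symm
  intro θ hθ
  rw [hQeq θ hθ, hκ1, one_mul]

end Uniqueness

section Vanish

/-- If a solution of `f'' = k f` vanishes to first order at a point of `[a,b]`,
it vanishes at `a`. -/
lemma ode_vanish {k f f' : ℝ → ℝ} (hk : Continuous k)
    (hf : ∀ x, HasDerivAt f (f' x) x)
    (hf' : ∀ x, HasDerivAt f' (k x * f x) x)
    {a b x₀ : ℝ} (hab : a ≤ b) (hx₀ : x₀ ∈ Icc a b)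
    (h0 : f x₀ = 0) (h0' : f' x₀ = 0) : f a = 0 := by
  -- clamp the coefficient
  set kc : ℝ → ℝ := fun t => k (min (max t a) b) with hkc
  obtain ⟨M, hM⟩ : ∃ M, ∀ x ∈ Icc a b, |k x| ≤ M := by
    obtain ⟨M, hM⟩ := (isCompact_Icc (a := a) (b := b)).exists_bound_of_continuousOn
      hk.continuousOn
    exact ⟨M, fun x hx => hM x hx⟩
  have hM0 : 0 ≤ M := le_trans (abs_nonneg _) (hM a ⟨le_rfl, hab⟩)
  set L : NNReal := Real.toNNReal (max 1 M) with hL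
  have hclamp : ∀ t : ℝ, min (max t a) b ∈ Icc a b := by
    intro t
    constructor
    · exact le_min (le_max_right t a) hab
    · exact min_le_right _ _
  have hclamp_id : ∀ t ∈ Icc a x₀, min (max t a) b = t := by
    intro t ht
    rw [max_eq_left ht.1, min_eq_left (le_trans ht.2 hx₀.2)]
  set v : ℝ → ℝ × ℝ → ℝ × ℝ := fun t p => (p.2, kc t * p.1) with hv
  have hlip : ∀ t : ℝ, LipschitzOnWith L (v t) univ := by
    intro t
    apply LipschitzOnWith.of_dist_le_mul
    intro p _ q _
    have hkcb : |kc t| ≤ M := hM _ (hclamp t)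
    simp only [Prod.dist_eq, Real.dist_eq, hv]
    have h1 : |p.2 - q.2| ≤ (max 1 M) * max |p.1 - q.1| |p.2 - q.2| := by
      calc |p.2 - q.2| ≤ max |p.1 - q.1| |p.2 - q.2| := le_max_right _ _
        _ ≤ (max 1 M) * max |p.1 - q.1| |p.2 - q.2| := by
            nlinarith [le_max_left (1:ℝ) M, abs_nonneg (p.1 - q.1), abs_nonneg (p.2 - q.2),
              le_max_left |p.1 - q.1| |p.2 - q.2|, le_max_right |p.1 - q.1| |p.2 - q.2|]
    have h2 : |kc t * p.1 - kc t * q.1| ≤ (max 1 M) * max |p.1 - q.1| |p.2 - q.2| := by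
      rw [← mul_sub, abs_mul]
      calc |kc t| * |p.1 - q.1| ≤ M * max |p.1 - q.1| |p.2 - q.2| := by
            apply mul_le_mul hkcb (le_max_left _ _) (abs_nonneg _) hM0
        _ ≤ (max 1 M) * max |p.1 - q.1| |p.2 - q.2| := by
            apply mul_le_mul_of_nonneg_right (le_max_right _ _)
            exact le_trans (abs_nonneg _) (le_max_left _ _)
    have hcoe : (L : ℝ) = max 1 M := Real.coe_toNNReal _ (le_trans zero_le_one (le_max_left _ _))
    rw [hcoe]
    exact max_le h1 h2
  set F : ℝ → ℝ × ℝ := fun t => (f t, f' t) with hF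
  set G : ℝ → ℝ × ℝ := fun _ => ((0:ℝ), (0:ℝ)) with hG
  have heq : EqOn F G (Icc a x₀) := by
    apply ODE_solution_unique_of_mem_Icc_left (v := v) (s := fun _ => univ) (fun t _ => hlip t)
    · apply Continuous.continuousOn
      exact (continuous_iff_continuousAt.mpr fun x => (hf x).continuousAt).prodMk
        (continuous_iff_continuousAt.mpr fun x => (hf' x).continuousAt)
    · intro t ht
      have h1 : HasDerivAt F (f' t, k t * f t) t := (hf t).prodMk (hf' t)
      have h2 : v t (F t) = (f' t, k t * f t) := by
        simp only [hv, hF]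
        rw [hkc]
        simp only
        rw [hclamp_id t (Ioc_subset_Icc_self ht)]
      rw [h2]
      exact h1.hasDerivWithinAt
    · exact fun t _ => mem_univ _
    · exact continuousOn_const
    · intro t ht
      have : v t (G t) = ((0:ℝ), (0:ℝ)) := by simp [hv, hG]
      rw [this]
      exact (hasDerivAt_const t _).hasDerivWithinAt
    · exact fun t _ => mem_univ _
    · simp [hF, hG, h0, h0']
  have := heq (left_mem_Icc.mpr hx₀.1)
  simpa [hF, hG] using congrArg Prod.fst this

end Vanish

section Exist

variable (a alpha r lam : ℝ)

noncomputable def csq (μ : ℝ) : ℕ → ℝ :=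
  coef (-(lam^2)/alpha) ((μ - r - a*lam^2)/alpha)

noncomputable def PP (μ x : ℝ) : ℝ := psum (csq a alpha r lam μ) a x
noncomputable def PP1 (μ x : ℝ) : ℝ := psum (dseq (csq a alpha r lam μ)) a x
noncomputable def PP2 (μ x : ℝ) : ℝ := psum (dseq (dseq (csq a alpha r lam μ))) a x

lemma good_of_bounds {A B CA CB : ℝ} (hA : 2*|A| ≤ CA) (hB : 2*|B| ≤ CB)
    (hCA : 0 ≤ CA) (hCB : 0 ≤ CB) :
    Good (coef A B) (1 + CA + CB) := by
  have h1 : (1:ℝ) ≤ 1 + CA + CB := by linarith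
  have hC2 : 1 + CA + CB ≤ (1 + CA + CB)^2 := by nlinarith
  have hC3 : 1 + CA + CB ≤ (1 + CA + CB)^3 := by nlinarith
  exact coef_good h1 (by linarith) (by linarith)

lemma csq_good (halpha : 0 < alpha) (μ : ℝ) : ∃ C, Good (csq a alpha r lam μ) C :=
  ⟨_, good_of_bounds (le_refl (2*|(-(lam^2)/alpha)|)) (le_refl (2*|((μ - r - a*lam^2)/alpha)|))
    (by positivity) (by positivity)⟩

lemma csq_good_unif (halpha : 0 < alpha) (K : ℝ) (hK : 0 < K) :
    ∃ C, ∀ μ ∈ Icc (-K) K, Good (csq a alpha r lam μ) C := by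
  have hnum : 0 ≤ K + |r + a*lam^2| := by
    have := abs_nonneg (r + a*lam^2)
    linarith
  refine ⟨1 + 2*|(-(lam^2)/alpha)| + 2*((K + |r + a*lam^2|)/alpha), fun μ hμ => ?_⟩
  apply good_of_bounds (le_refl _) _ (by positivity)
    (mul_nonneg (by norm_num) (div_nonneg hnum halpha.le))
  have h1 : |μ - r - a*lam^2| ≤ K + |r + a*lam^2| := by
    simp only [mem_Icc] at hμ
    cases abs_cases (μ - r - a*lam^2) <;> cases abs_cases (r + a*lam^2) <;> linarith
  have h2 : |(μ - r - a*lam^2)/alpha| = |μ - r - a*lam^2| / alpha := by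
    rw [abs_div, abs_of_pos halpha]
  rw [h2]
  gcongr

lemma PP_hasDeriv (halpha : 0 < alpha) (μ x : ℝ) :
    HasDerivAt (PP a alpha r lam μ) (PP1 a alpha r lam μ x) x := by
  obtain ⟨C, hC⟩ := csq_good a alpha r lam halpha μ
  exact hC.hasDerivAt_psum a x

lemma PP1_hasDeriv (halpha : 0 < alpha) (μ x : ℝ) :
    HasDerivAt (PP1 a alpha r lam μ) (PP2 a alpha r lam μ x) x := by
  obtain ⟨C, hC⟩ := csq_good a alpha r lam halpha μ
  exact hC.dseq.hasDerivAt_psum a x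

lemma PP2_diff (halpha : 0 < alpha) (μ x : ℝ) :
    DifferentiableAt ℝ (PP2 a alpha r lam μ) x := by
  obtain ⟨C, hC⟩ := csq_good a alpha r lam halpha μ
  exact (hC.dseq.dseq.hasDerivAt_psum a x).differentiableAt

lemma PP_at_a (μ : ℝ) : PP a alpha r lam μ a = 1 := by
  rw [PP, psum_center]
  simp only [csq, coef]

lemma PP1_at_a (μ : ℝ) : PP1 a alpha r lam μ a = 0 := by
  rw [PP1, psum_center]
  simp only [dseq, csq]
  rw [coef]
  ring

lemma PP_ode (halpha : 0 < alpha) (μ x : ℝ) :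
    PP2 a alpha r lam μ x = ((μ - r - x*lam^2)/alpha) * PP a alpha r lam μ x := by
  obtain ⟨C, hC⟩ := csq_good a alpha r lam halpha μ
  have h := psum_coef_ode hC a x
  simp only [PP2, PP, csq]
  rw [h]
  have : (-(lam^2)/alpha * (x - a) + (μ - r - a*lam^2)/alpha) = (μ - r - x*lam^2)/alpha := by
    field_simp
    ring
  rw [this]

lemma PP_cont (halpha : 0 < alpha) :
    Continuous fun p : ℝ × ℝ => PP a alpha r lam p.1 p.2 := by
  apply continuous_psum_family a (cc := fun n μ => csq a alpha r lam μ n)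
  · intro n
    apply (coef_continuous (-(lam^2)/alpha) n).comp
    exact ((continuous_id.sub continuous_const).sub continuous_const).div_const alpha
  · intro K hK
    obtain ⟨C, hC⟩ := csq_good_unif a alpha r lam halpha K hK
    exact ⟨C, fun μ hμ => hC μ hμ⟩

lemma PP1_cont (halpha : 0 < alpha) :
    Continuous fun p : ℝ × ℝ => PP1 a alpha r lam p.1 p.2 := by
  apply continuous_psum_family a (cc := fun n μ => dseq (csq a alpha r lam μ) n)
  · intro n
    apply Continuous.mul continuous_const
    apply (coef_continuous (-(lam^2)/alpha) (n+1)).comp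
    exact ((continuous_id.sub continuous_const).sub continuous_const).div_const alpha
  · intro K hK
    obtain ⟨C, hC⟩ := csq_good_unif a alpha r lam halpha K hK
    exact ⟨2*C^2, fun μ hμ => (hC μ hμ).dseq⟩

lemma exists_spectral_pair (a b : ℝ) (hab : a < b) (halpha : 0 < alpha)
    (hr : 0 < r) (hlam : 0 < lam) :
    ∃ c Q, IsSpectralPair a b alpha r lam c Q := by
  classical
  set P : ℝ → ℝ → ℝ := PP a alpha r lam with hPdef
  set P1 : ℝ → ℝ → ℝ := PP1 a alpha r lam with hP1def
  set P2 : ℝ → ℝ → ℝ := PP2 a alpha r lam with hP2def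
  have hPd : ∀ μ x, HasDerivAt (P μ) (P1 μ x) x := fun μ x => PP_hasDeriv a alpha r lam halpha μ x
  have hP1d : ∀ μ x, HasDerivAt (P1 μ) (P2 μ x) x := fun μ x => PP1_hasDeriv a alpha r lam halpha μ x
  have hPa : ∀ μ, P μ a = 1 := fun μ => PP_at_a a alpha r lam μ
  have hP1a : ∀ μ, P1 μ a = 0 := fun μ => PP1_at_a a alpha r lam μ
  have hodeP : ∀ μ x, P2 μ x = ((μ - r - x*lam^2)/alpha) * P μ x :=
    fun μ x => PP_ode a alpha r lam halpha μ x
  have hPc : Continuous fun p : ℝ × ℝ => P p.1 p.2 := PP_cont a alpha r lam halpha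
  have hP1c : Continuous fun p : ℝ × ℝ => P1 p.1 p.2 := PP1_cont a alpha r lam halpha
  have hPcont : ∀ μ, Continuous (P μ) := fun μ =>
    hPc.comp (continuous_const.prodMk continuous_id)
  have hP1cont : ∀ μ, Continuous (P1 μ) := fun μ =>
    hP1c.comp (continuous_const.prodMk continuous_id)
  have hPointc : ∀ x, Continuous fun μ => P μ x := fun x =>
    hPc.comp (continuous_id.prodMk continuous_const)
  have hP1ointc : ∀ x, Continuous fun μ => P1 μ x := fun x =>
    hP1c.comp (continuous_id.prodMk continuous_const)
  -- the shooting set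
  set S : Set ℝ := {μ | ∀ x ∈ Icc a b, 0 < P μ x} ∩ {μ | 0 < P1 μ b} with hSdef
  -- ### S is nonempty
  have hSne : (r + b*lam^2 + alpha) ∈ S := by
    set μ₁ : ℝ := r + b*lam^2 + alpha with hμ₁
    have hk1 : ∀ x ∈ Icc a b, (1:ℝ) ≤ ((μ₁ - r - x*lam^2)/alpha) := by
      intro x hx
      rw [le_div_iff₀ halpha, hμ₁]
      nlinarith [hx.2, sq_nonneg lam, mul_le_mul_of_nonneg_right hx.2 (sq_nonneg lam)]
    have hposb : ∀ x ∈ Icc a b, 0 < P μ₁ x := by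
      by_contra hcon
      push_neg at hcon
      obtain ⟨x₀, hx₀, hx₀le⟩ := hcon
      set Z : Set ℝ := Icc a b ∩ {x | P μ₁ x ≤ 0} with hZ
      have hZne : Z.Nonempty := ⟨x₀, hx₀, hx₀le⟩
      have hZclosed : IsClosed Z :=
        isClosed_Icc.inter (isClosed_le (hPcont μ₁) continuous_const)
      have hZbdd : BddBelow Z := ⟨a, fun z hz => hz.1.1⟩
      set z : ℝ := sInf Z with hz
      have hzZ : z ∈ Z := hZclosed.csInf_mem hZne hZbdd
      have hza : a < z := by
        rcases lt_or_eq_of_le hzZ.1.1 with h | h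
        · exact h
        · exfalso
          have h2 : P μ₁ z ≤ 0 := hzZ.2
          rw [← h, hPa] at h2
          linarith
      have hpos_on : ∀ x ∈ Ico a z, 0 < P μ₁ x := by
        intro x hx
        by_contra hle
        push_neg at hle
        have hxZ : x ∈ Z := ⟨⟨hx.1, le_trans hx.2.le hzZ.1.2⟩, hle⟩
        have := csInf_le hZbdd hxZ
        rw [← hz] at this
        linarith [hx.2]
      have hsub : Icc a z ⊆ Icc a b := Icc_subset_Icc le_rfl hzZ.1.2
      have hmono1 : MonotoneOn (P1 μ₁) (Icc a z) := by
        apply monotoneOn_of_deriv_nonneg (convex_Icc a z) (hP1cont μ₁).continuousOn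
        · intro x hx
          exact ((hP1d μ₁ x).differentiableAt).differentiableWithinAt
        · intro x hx
          rw [interior_Icc] at hx
          rw [(hP1d μ₁ x).deriv, hodeP]
          apply mul_nonneg
          · exact le_trans zero_le_one (hk1 x (hsub ⟨hx.1.le, hx.2.le⟩))
          · exact (hpos_on x ⟨hx.1.le, hx.2⟩).le
      have hP1nn : ∀ x ∈ Icc a z, 0 ≤ P1 μ₁ x := by
        intro x hx
        have := hmono1 (left_mem_Icc.mpr hza.le) hx hx.1
        rwa [hP1a] at this
      have hmono0 : MonotoneOn (P μ₁) (Icc a z) := by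
        apply monotoneOn_of_deriv_nonneg (convex_Icc a z) (hPcont μ₁).continuousOn
        · intro x hx
          exact ((hPd μ₁ x).differentiableAt).differentiableWithinAt
        · intro x hx
          rw [interior_Icc] at hx
          rw [(hPd μ₁ x).deriv]
          exact hP1nn x ⟨hx.1.le, hx.2.le⟩
      have h1z : 1 ≤ P μ₁ z := by
        have := hmono0 (left_mem_Icc.mpr hza.le) (right_mem_Icc.mpr hza.le) hza.le
        rwa [hPa] at this
      have h2 : P μ₁ z ≤ 0 := hzZ.2
      linarith
    refine ⟨hposb, ?_⟩
    have hsm : StrictMonoOn (P1 μ₁) (Icc a b) := by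
      apply strictMonoOn_of_deriv_pos (convex_Icc a b) (hP1cont μ₁).continuousOn
      intro x hx
      rw [interior_Icc] at hx
      rw [(hP1d μ₁ x).deriv, hodeP]
      exact mul_pos (lt_of_lt_of_le one_pos (hk1 x (Ioo_subset_Icc_self hx)))
        (hposb x (Ioo_subset_Icc_self hx))
    have := hsm (left_mem_Icc.mpr hab.le) (right_mem_Icc.mpr hab.le) hab
    rwa [hP1a] at this
  -- ### S is bounded below
  set m : ℝ := Real.pi / (b - a) with hm
  have hmpos : 0 < m := div_pos Real.pi_pos (by linarith)
  have hSlb : ∀ μ ∈ S, r + a*lam^2 - alpha*m^2 ≤ μ := by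
    intro μ hμ
    obtain ⟨hpos, -⟩ := hμ
    by_contra hlt
    push_neg at hlt
    set θ₁ : ℝ := (a+b)/2 with hθ₁
    have hθ₁ab : a < θ₁ ∧ θ₁ < b := ⟨by rw [hθ₁]; linarith, by rw [hθ₁]; linarith⟩
    have hangle : m * (θ₁ - a) = Real.pi/2 := by
      have hba : b - a ≠ 0 := ne_of_gt (sub_pos.mpr hab)
      rw [hθ₁, hm]
      field_simp
      ring
    set y : ℝ → ℝ := fun x => Real.cos (m*(x-a)) with hy
    set y' : ℝ → ℝ := fun x => -(m * Real.sin (m*(x-a))) with hy'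
    have hinner : ∀ x : ℝ, HasDerivAt (fun x => m*(x-a)) m x := by
      intro x
      simpa using ((hasDerivAt_id x).sub_const a).const_mul m
    have hyd : ∀ x, HasDerivAt y (y' x) x := by
      intro x
      have := (Real.hasDerivAt_cos (m*(x-a))).comp x (hinner x)
      simpa [hy, hy', mul_comm, Function.comp_def] using this
    have hy'd : ∀ x, HasDerivAt y' (-(m^2) * y x) x := by
      intro x
      have h1 := ((Real.hasDerivAt_sin (m*(x-a))).comp x (hinner x)).const_mul m
      have h2 := h1.neg
      refine h2.congr_deriv ?_
      simp only [hy]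
      ring
    set W : ℝ → ℝ := fun x => P1 μ x * y x - P μ x * y' x with hW
    have hWa : W a = 0 := by
      simp [hW, hP1a, hy', hPa]
    have hWd : ∀ x, HasDerivAt W (P2 μ x * y x - P μ x * (-(m^2) * y x)) x := by
      intro x
      have h := (((hP1d μ x).mul (hyd x))).sub ((hPd μ x).mul (hy'd x))
      exact h.congr_deriv (by ring)
    have hanti : AntitoneOn W (Icc a θ₁) := by
      apply antitoneOn_of_deriv_nonpos (convex_Icc a θ₁) (Continuous.continuousOn (by
        apply Continuous.sub
        · exact (hP1cont μ).mul (by fun_prop)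
        · exact (hPcont μ).mul (by fun_prop)))
      · intro x hx
        exact ((hWd x).differentiableAt).differentiableWithinAt
      · intro x hx
        rw [interior_Icc] at hx
        rw [(hWd x).deriv, hodeP]
        have hxab : x ∈ Icc a b := ⟨hx.1.le, le_trans hx.2.le hθ₁ab.2.le⟩
        have hknn : (μ - r - x*lam^2)/alpha + m^2 ≤ 0 := by
          have hnum : μ - r - x*lam^2 ≤ -(alpha*m^2) := by
            nlinarith [mul_le_mul_of_nonneg_right hxab.1 (sq_nonneg lam)]
          have h2 : (μ - r - x*lam^2)/alpha ≤ (-(alpha*m^2))/alpha :=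
            (div_le_div_iff_of_pos_right halpha).mpr hnum
          have h3 : (-(alpha*m^2))/alpha = -m^2 := by
            field_simp
          rw [h3] at h2
          linarith
        have hynn : 0 ≤ y x := by
          show 0 ≤ Real.cos (m*(x-a))
          apply Real.cos_nonneg_of_mem_Icc
          rw [Set.mem_Icc]
          have hge : 0 ≤ m * (x - a) := mul_nonneg hmpos.le (by linarith [hx.1])
          have hle : m * (x - a) ≤ Real.pi/2 := by
            rw [← hangle]
            exact mul_le_mul_of_nonneg_left (by linarith [hx.2]) hmpos.le
          exact ⟨by linarith [Real.pi_pos], hle⟩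
        have hPx : 0 < P μ x := hpos x hxab
        have : (μ - r - x*lam^2)/alpha * P μ x * y x - P μ x * (-(m^2) * y x)
            = ((μ - r - x*lam^2)/alpha + m^2) * (P μ x * y x) := by ring
        rw [this]
        exact mul_nonpos_of_nonpos_of_nonneg hknn (mul_nonneg hPx.le hynn)
    have hWθ₁ : W θ₁ ≤ 0 := by
      have := hanti (left_mem_Icc.mpr hθ₁ab.1.le) (right_mem_Icc.mpr hθ₁ab.1.le) hθ₁ab.1.le
      rwa [hWa] at this
    have hWθ₁pos : 0 < W θ₁ := by
      have hyθ : y θ₁ = 0 := by rw [hy]; simp only; rw [hangle, Real.cos_pi_div_two]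
      have hy'θ : y' θ₁ = -m := by
        rw [hy']
        simp only
        rw [hangle, Real.sin_pi_div_two, mul_one]
      rw [hW]
      simp only
      rw [hyθ, hy'θ]
      have := hpos θ₁ ⟨hθ₁ab.1.le, hθ₁ab.2.le⟩
      have hres : P1 μ θ₁ * 0 - P μ θ₁ * (-m) = m * P μ θ₁ := by ring
      rw [hres]
      exact mul_pos hmpos this
    linarith
  have hSbdd : BddBelow S := ⟨r + a*lam^2 - alpha*m^2, hSlb⟩
  have hSne' : S.Nonempty := ⟨_, hSne⟩
  -- ### S is open
  have hSopen : IsOpen S := by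
    apply IsOpen.inter
    · rw [isOpen_iff_mem_nhds]
      intro μ₀ hμ₀
      have hU : IsOpen {p : ℝ × ℝ | 0 < P p.1 p.2} := isOpen_lt continuous_const hPc
      have hsub : ({μ₀} : Set ℝ) ×ˢ Icc a b ⊆ {p : ℝ × ℝ | 0 < P p.1 p.2} := by
        rintro ⟨μ, x⟩ ⟨hμ, hx⟩
        rw [mem_singleton_iff] at hμ
        subst hμ
        exact hμ₀ x hx
      obtain ⟨U, V, hUopen, hVopen, hU1, hV1, hUV⟩ :=
        generalized_tube_lemma isCompact_singleton isCompact_Icc hU hsub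
      rw [mem_nhds_iff]
      refine ⟨U, ?_, hUopen, hU1 rfl⟩
      intro μ hμU x hx
      exact hUV (Set.mk_mem_prod hμU (hV1 hx))
    · exact isOpen_lt continuous_const (hP1ointc b)
  -- ### the principal eigenvalue
  set μs : ℝ := sInf S with hμs
  have hcl : μs ∈ closure S := csInf_mem_closure hSne' hSbdd
  have hPge : ∀ x ∈ Icc a b, 0 ≤ P μs x := by
    intro x hx
    have hclosed : IsClosed {μ | 0 ≤ P μ x} := isClosed_le continuous_const (hPointc x)
    exact closure_minimal (fun μ hμ => (hμ.1 x hx).le) hclosed hcl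
  have hP1ge : 0 ≤ P1 μs b := by
    have hclosed : IsClosed {μ | 0 ≤ P1 μ b} := isClosed_le continuous_const (hP1ointc b)
    exact closure_minimal (fun μ hμ => le_of_lt (hμ.2 : 0 < P1 μ b)) hclosed hcl
  have hvanish : ∀ x₀ ∈ Icc a b, P μs x₀ = 0 → P1 μs x₀ = 0 → False := by
    intro x₀ hx₀ h0 h0'
    have hkc : Continuous fun x : ℝ => (μs - r - x*lam^2)/alpha := by fun_prop
    have := ode_vanish hkc (hPd μs)
      (fun x => by rw [← hodeP]; exact hP1d μs x) hab.le hx₀ h0 h0'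
    rw [hPa] at this
    exact one_ne_zero this
  have hPpos : ∀ x ∈ Icc a b, 0 < P μs x := by
    intro x hx
    rcases lt_or_eq_of_le (hPge x hx) with h | h
    · exact h
    exfalso
    have h0 : P μs x = 0 := h.symm
    have hxa : a < x := by
      rcases lt_or_eq_of_le hx.1 with h' | h'
      · exact h'
      · exfalso
        rw [← h', hPa] at h0
        linarith
    rcases lt_or_eq_of_le hx.2 with hxb | hxb
    · -- interior zero is a local min
      have hnhds : Icc a b ∈ nhds x := Icc_mem_nhds hxa hxb
      have hlocmin : IsLocalMin (P μs) x := by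
        filter_upwards [hnhds] with y hy
        rw [h0]
        exact hPge y hy
      have hP1x : P1 μs x = 0 := hlocmin.hasDerivAt_eq_zero (hPd μs x)
      exact hvanish x hx h0 hP1x
    · -- zero at the right endpoint
      have h0b : P μs b = 0 := by rw [← hxb]; exact h0
      have hslope : P1 μs b ≤ 0 := by
        have hdw : HasDerivWithinAt (P μs) (P1 μs b) (Ioo a b) b :=
          (hPd μs b).hasDerivWithinAt
        rw [hasDerivWithinAt_iff_tendsto_slope] at hdw
        have hIoo : Ioo a b \ {b} = Ioo a b :=
          diff_singleton_eq_self (fun hmem => lt_irrefl b hmem.2)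
        rw [hIoo] at hdw
        have hne : (nhdsWithin b (Ioo a b)).NeBot := by
          apply mem_closure_iff_nhdsWithin_neBot.mp
          rw [closure_Ioo hab.ne]
          exact right_mem_Icc.mpr hab.le
        apply le_of_tendsto hdw
        filter_upwards [self_mem_nhdsWithin] with z hz
        rw [slope_def_field]
        have hnum : 0 ≤ P μs z := hPge z (Ioo_subset_Icc_self hz)
        rw [h0b]
        apply div_nonpos_of_nonneg_of_nonpos (by linarith)
        linarith [hz.2]
      have hP1b0 : P1 μs b = 0 := le_antisymm hslope hP1ge
      exact hvanish b (right_mem_Icc.mpr hab.le) h0b hP1b0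
  have hP1b : P1 μs b = 0 := by
    rcases lt_or_eq_of_le hP1ge with h | h
    · exfalso
      have hμsS : μs ∈ S := ⟨hPpos, h⟩
      obtain ⟨ε, hε, hball⟩ := Metric.isOpen_iff.mp hSopen μs hμsS
      have hmem : μs - ε/2 ∈ S := by
        apply hball
        rw [Metric.mem_ball, Real.dist_eq]
        rw [abs_of_nonpos (by linarith)]
        linarith
      have := csInf_le hSbdd hmem
      rw [← hμs] at this
      linarith
    · exact h.symm
  -- ### assemble the spectral pair
  set J : ℝ := ∫ x in Ioo a b, P μs x with hJ
  have hJeq : J = ∫ x in a..b, P μs x := by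
    rw [hJ, intervalIntegral.integral_of_le hab.le, MeasureTheory.integral_Ioc_eq_integral_Ioo]
  have hJpos : 0 < J := by
    rw [hJeq]
    apply intervalIntegral.intervalIntegral_pos_of_pos_on
      ((hPcont μs).intervalIntegrable a b)
      (fun x hx => hPpos x (Ioo_subset_Icc_self hx)) hab
  set Q : ℝ → ℝ := fun x => J⁻¹ * P μs x with hQ
  have hQd : ∀ x, HasDerivAt Q (J⁻¹ * P1 μs x) x := fun x => (hPd μs x).const_mul J⁻¹
  have hQderiv : deriv Q = fun x => J⁻¹ * P1 μs x := funext fun x => (hQd x).deriv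
  have hQd2 : ∀ x, HasDerivAt (fun x => J⁻¹ * P1 μs x) (J⁻¹ * P2 μs x) x :=
    fun x => (hP1d μs x).const_mul J⁻¹
  have hQdd : deriv (deriv Q) = fun x => J⁻¹ * P2 μs x := by
    rw [hQderiv]
    exact funext fun x => (hQd2 x).deriv
  have hitd2 : iteratedDeriv 2 Q = fun x => J⁻¹ * P2 μs x := by
    rw [iteratedDeriv_succ, iteratedDeriv_one, hQdd]
  refine ⟨μs/lam, Q, ?_, ?_, ?_, ?_, ?_, ?_⟩
  · -- ContDiff
    have h2 : ContDiff ℝ ((2:ℕ∞) : WithTop ℕ∞) Q := by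
      apply contDiff_of_differentiable_iteratedDeriv
      intro mm hmm
      have hmm2 : mm ≤ 2 := by exact_mod_cast hmm
      interval_cases mm
      · rw [iteratedDeriv_zero]
        exact fun x => (hQd x).differentiableAt
      · rw [iteratedDeriv_one, hQderiv]
        exact fun x => (hQd2 x).differentiableAt
      · rw [hitd2]
        intro x
        exact (PP2_diff a alpha r lam halpha μs x).const_mul J⁻¹
    exact_mod_cast h2
  · intro θ hθ
    exact mul_pos (inv_pos.mpr hJpos) (hPpos θ hθ)
  · rw [hQ]
    simp only
    rw [integral_const_mul, ← hJ]
    exact inv_mul_cancel₀ (ne_of_gt hJpos)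
  · intro θ hθ
    rw [hitd2]
    simp only [hQ]
    rw [hodeP μs θ]
    have hclam : lam * (μs/lam) = μs := by field_simp
    rw [hclam]
    field_simp
    ring
  · rw [hQderiv]
    simp only
    rw [hP1a, mul_zero]
  · rw [hQderiv]
    simp only
    rw [hP1b, mul_zero]

end Exist

end SpecAux

theorem statement1 (thmin thmax alpha r : ℝ)
    (hth : 0 < thmin) (hthth : thmin < thmax) (halpha : 0 < alpha) (hr : 0 < r)
    (lam : ℝ) (hlam : 0 < lam) :
    (∃ (c : ℝ) (Q : ℝ → ℝ), IsSpectralPair thmin thmax alpha r lam c Q) ∧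
    (∀ (c₁ c₂ : ℝ) (Q₁ Q₂ : ℝ → ℝ),
      IsSpectralPair thmin thmax alpha r lam c₁ Q₁ →
      IsSpectralPair thmin thmax alpha r lam c₂ Q₂ →
      c₁ = c₂ ∧ ∀ θ ∈ Set.Icc thmin thmax, Q₁ θ = Q₂ θ) := by
  constructor
  · exact SpecAux.exists_spectral_pair alpha r lam thmin thmax hthth halpha hr hlam
  · intro c₁ c₂ Q₁ Q₂ h1 h2
    exact SpecAux.spectral_uniqueness hthth halpha hlam h1 h2
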